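/- Let 𝓗 be the monoid, under composition (f·h := f∘h), of all weakly increasing surjections f of the positive integers onto themselves for which there is a constant c with f(m) = m − c for all sufficiently large m. Then the assignment η_k ↦ (the map m ↦ m for m ≤ k, m ↦ m−1 for m > k) extends to a monoid isomorphism from the monoid presented by generators η_k (k ≥ 1) with defining relations η_ℓ·η_k = η_k·η_{ℓ+1} for all ℓ ≥ k ≥ 1, onto 𝓗. -/

import Mathlib

/-- The defining relation of the abstract hedge monoid:
`η_ℓ * η_k = η_k * η_{ℓ+1}` for `ℓ ≥ k`. -/
def HedgeRel : FreeMonoid ℕ+ → FreeMonoid ℕ+ → Prop := fun a b =>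
  ∃ k l : ℕ+, k ≤ l ∧ a = FreeMonoid.of l * FreeMonoid.of k ∧
    b = FreeMonoid.of k * FreeMonoid.of (l + 1)

/-- The abstractly presented hedge monoid. -/
abbrev HedgeMonoid := (conGen HedgeRel).Quotient

/-- The generator `η_k` of the presented hedge monoid. -/
def eta (k : ℕ+) : HedgeMonoid := (conGen HedgeRel).mk' (FreeMonoid.of k)

/-- The concrete hedge `η_k : ℕ+ → ℕ+`, as an element of the composition monoid
`Function.End ℕ+` (in which `f * h = f ∘ h`). -/
def etaFun (k : ℕ+) : Function.End ℕ+ := fun m => if m ≤ k then m else m - 1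

lemma etaFun_coe (k m : ℕ+) :
    ((etaFun k m : ℕ+) : ℕ) = if (m : ℕ) ≤ (k : ℕ) then (m : ℕ) else (m : ℕ) - 1 := by
  unfold etaFun
  by_cases h : m ≤ k
  · simp [h, (PNat.coe_le_coe m k).mpr h]
  · have hk : (k : ℕ) < (m : ℕ) := (PNat.coe_lt_coe k m).mpr (lt_of_not_ge h)
    have h1 : (1 : ℕ+) < m := by
      have := k.pos
      exact (PNat.coe_lt_coe 1 m).mp (by simpa using by omega)
    simp only [h, if_false, PNat.sub_coe, h1, if_true, PNat.one_coe]
    rw [if_neg (by omega)]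

lemma etaFun_rel {k l : ℕ+} (h : k ≤ l) : etaFun l * etaFun k = etaFun k * etaFun (l + 1) := by
  funext m
  apply PNat.coe_injective
  show ((etaFun l (etaFun k m) : ℕ+) : ℕ) = ((etaFun k (etaFun (l+1) m) : ℕ+) : ℕ)
  have hk : (k : ℕ) ≤ (l : ℕ) := (PNat.coe_le_coe k l).mpr h
  have hm := m.pos
  have hkp := k.pos
  rw [etaFun_coe, etaFun_coe, etaFun_coe, etaFun_coe]
  have hl1 : ((l + 1 : ℕ+) : ℕ) = (l : ℕ) + 1 := by rw [PNat.add_coe, PNat.one_coe]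
  split_ifs <;> omega

lemma hedge_ker : conGen HedgeRel ≤ Con.ker (FreeMonoid.lift etaFun) := by
  apply Con.conGen_le.mpr
  rintro a b ⟨k, l, hkl, rfl, rfl⟩
  simp only [Con.ker_rel, map_mul, FreeMonoid.lift_eval_of]
  exact etaFun_rel hkl

def hedgePhi : HedgeMonoid →* Function.End ℕ+ := Con.lift _ _ hedge_ker

lemma hedgePhi_mk' (w : FreeMonoid ℕ+) :
    hedgePhi ((conGen HedgeRel).mk' w) = FreeMonoid.lift etaFun w := Con.lift_mk' _ _

lemma countP_le (m : ℕ+) : ∀ (w : List ℕ+), w.Pairwise (· < ·) → ∀ b : ℕ,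
    (∀ x ∈ w, b < (x : ℕ)) →
    w.countP (fun a => decide (a < m)) ≤ (m : ℕ) - 1 - b := by
  intro w
  induction w with
  | nil => simp
  | cons a rest ih =>
    intro hs b hb
    obtain ⟨ha, hrest⟩ := List.pairwise_cons.mp hs
    rw [List.countP_cons]
    by_cases ham : a < m
    · have h1 := ih hrest (a : ℕ) (fun x hx => (PNat.coe_lt_coe a x).mpr (ha x hx))
      have hba : b < (a : ℕ) := hb a (List.mem_cons_self)
      have ham' : (a : ℕ) < (m : ℕ) := (PNat.coe_lt_coe a m).mpr ham
      rw [if_pos (decide_eq_true ham)]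
      omega
    · have hc0 : rest.countP (fun a => decide (a < m)) = 0 :=
        List.countP_eq_zero.mpr (fun x hx => by
          simp only [decide_eq_true_eq]
          exact fun hxm => ham ((ha x hx).trans hxm))
      simp [ham, hc0]

lemma eval_sorted : ∀ (w : List ℕ+), w.Pairwise (· < ·) → ∀ m : ℕ+,
    (((FreeMonoid.lift etaFun) (FreeMonoid.ofList w) : Function.End ℕ+) m : ℕ)
      = (m : ℕ) - w.countP (fun a => decide (a < m)) := by
  intro w
  induction w with
  | nil =>
    intro _ m
    show (((FreeMonoid.lift etaFun) 1 : Function.End ℕ+) m : ℕ) = _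
    rw [map_one]
    simp
    rfl
  | cons a rest ih =>
    intro hs m
    obtain ⟨ha, hrest⟩ := List.pairwise_cons.mp hs
    have hofl : FreeMonoid.ofList (a :: rest) = FreeMonoid.of a * FreeMonoid.ofList rest := rfl
    rw [hofl, map_mul, FreeMonoid.lift_eval_of]
    show ((etaFun a ((FreeMonoid.lift etaFun) (FreeMonoid.ofList rest) m) : ℕ+) : ℕ) = _
    rw [etaFun_coe]
    have hg := ih hrest m
    rw [hg, List.countP_cons]
    by_cases ham : a < m
    · have hb := countP_le m rest hrest (a : ℕ)
        (fun x hx => (PNat.coe_lt_coe a x).mpr (ha x hx))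
      have ham' : (a : ℕ) < (m : ℕ) := (PNat.coe_lt_coe a m).mpr ham
      have hif : ¬ ((m : ℕ) - rest.countP (fun a => decide (a < m)) ≤ (a : ℕ)) := by omega
      rw [if_neg hif, if_pos (decide_eq_true ham)]
      omega
    · have hc0 : rest.countP (fun a => decide (a < m)) = 0 :=
        List.countP_eq_zero.mpr (fun x hx => by
          simp only [decide_eq_true_eq]
          exact fun hxm => ham ((ha x hx).trans hxm))
      have ham' : (m : ℕ) ≤ (a : ℕ) := (PNat.coe_le_coe m a).mpr (le_of_not_gt ham)
      rw [hc0, if_pos (by omega : (m:ℕ) - 0 ≤ (a:ℕ)), if_neg (by simp [ham])]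

lemma countP_succ (a : ℕ+) (w : List ℕ+) :
    w.countP (fun x => decide (x < a + 1)) = w.countP (fun x => decide (x < a)) + w.count a := by
  induction w with
  | nil => simp
  | cons b rest ih =>
    rw [List.countP_cons, List.countP_cons, List.count_cons, ih]
    have hiff : (b < a + 1) ↔ (b < a ∨ b = a) := by
      rw [PNat.lt_add_one_iff, le_iff_lt_or_eq]
    by_cases h1 : b < a
    · have h2 : (b == a) = false := beq_false_of_ne (ne_of_lt h1)
      rw [if_pos (decide_eq_true (hiff.mpr (Or.inl h1))), if_pos (decide_eq_true h1), h2]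
      simp
      omega
    · by_cases h2 : b = a
      · rw [if_pos (decide_eq_true (hiff.mpr (Or.inr h2))), if_neg (by simpa using h1),
          if_pos (by simp [h2])]
        omega
      · have h3 : ¬ b < a + 1 := fun h => (hiff.mp h).elim h1 h2
        rw [if_neg (by simpa using h3), if_neg (by simpa using h1),
          if_neg (by simp [h2])]
        omega

lemma sorted_ext (u v : List ℕ+) (hu : u.Pairwise (· < ·)) (hv : v.Pairwise (· < ·))
    (h : ∀ m : ℕ+, u.countP (fun a => decide (a < m)) = v.countP (fun a => decide (a < m))) :
    u = v := by
  haveI : Std.Antisymm (α := ℕ+) (· < ·) := ⟨fun a b h1 h2 => absurd h2 (asymm h1)⟩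
  have hmem : ∀ a : ℕ+, a ∈ u ↔ a ∈ v := by
    intro a
    have hcu := countP_succ a u
    have hcv := countP_succ a v
    have : u.count a = v.count a := by
      have h1 := h (a + 1)
      have h2 := h a
      omega
    rw [← List.count_pos_iff, ← List.count_pos_iff, this]
  exact List.Perm.eq_of_pairwise' hu hv
    ((List.perm_ext_iff_of_nodup hu.nodup hv.nodup).mpr hmem)

lemma mk_rel {k l : ℕ+} (h : k ≤ l) :
    (conGen HedgeRel).mk' (FreeMonoid.of l * FreeMonoid.of k)
      = (conGen HedgeRel).mk' (FreeMonoid.of k * FreeMonoid.of (l + 1)) := by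
  apply (Con.eq _).mpr
  exact ConGen.Rel.of _ _ ⟨k, l, h, rfl, rfl⟩

lemma insert_sorted : ∀ (u : List ℕ+) (a : ℕ+), u.Pairwise (· < ·) →
    ∃ v : List ℕ+, v.Pairwise (· < ·) ∧ (∀ x ∈ v, x ∈ u ∨ a ≤ x) ∧
      (conGen HedgeRel).mk' (FreeMonoid.of a * FreeMonoid.ofList u)
        = (conGen HedgeRel).mk' (FreeMonoid.ofList v) := by
  intro u
  induction u with
  | nil =>
    intro a _
    exact ⟨[a], List.pairwise_singleton _ a,
      fun x hx => Or.inr (le_of_eq (List.mem_singleton.mp hx).symm), rfl⟩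
  | cons b rest ih =>
    intro a hs
    obtain ⟨hb, hrest⟩ := List.pairwise_cons.mp hs
    by_cases hab : a < b
    · refine ⟨a :: b :: rest, ?_, fun x hx => ?_, rfl⟩
      · exact List.pairwise_cons.mpr ⟨fun x hx => by
          rcases List.mem_cons.mp hx with h | h
          · exact h ▸ hab
          · exact hab.trans (hb x h), hs⟩
      · rcases List.mem_cons.mp hx with h | h
        · exact Or.inr (le_of_eq h.symm)
        · exact Or.inl h
    · have hba : b ≤ a := le_of_not_gt hab
      obtain ⟨v', hs', hmem', heq'⟩ := ih (a + 1) hrest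
      refine ⟨b :: v', ?_, fun x hx => ?_, ?_⟩
      · refine List.pairwise_cons.mpr ⟨fun x hx => ?_, hs'⟩
        rcases hmem' x hx with h | h
        · exact hb x h
        · exact lt_of_le_of_lt hba (lt_of_lt_of_le (PNat.lt_add_one_iff.mpr le_rfl) h)
      · rcases List.mem_cons.mp hx with h | h
        · exact Or.inl (h ▸ List.mem_cons_self)
        · rcases hmem' x h with h' | h'
          · exact Or.inl (List.mem_cons_of_mem b h')
          · exact Or.inr (le_of_lt (lt_of_lt_of_le (PNat.lt_add_one_iff.mpr le_rfl) h'))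
      · have e1 : FreeMonoid.of a * FreeMonoid.ofList (b :: rest)
            = (FreeMonoid.of a * FreeMonoid.of b) * FreeMonoid.ofList rest := by
          rw [mul_assoc]; rfl
        have e2 : FreeMonoid.ofList (b :: v') = FreeMonoid.of b * FreeMonoid.ofList v' := rfl
        rw [e1, e2]
        calc (conGen HedgeRel).mk' (FreeMonoid.of a * FreeMonoid.of b * FreeMonoid.ofList rest)
            = (conGen HedgeRel).mk' (FreeMonoid.of a * FreeMonoid.of b)
              * (conGen HedgeRel).mk' (FreeMonoid.ofList rest) := map_mul _ _ _
          _ = (conGen HedgeRel).mk' (FreeMonoid.of b * FreeMonoid.of (a + 1))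
              * (conGen HedgeRel).mk' (FreeMonoid.ofList rest) := by rw [mk_rel hba]
          _ = (conGen HedgeRel).mk' (FreeMonoid.of b)
              * (conGen HedgeRel).mk' (FreeMonoid.of (a + 1) * FreeMonoid.ofList rest) := by
                rw [map_mul, map_mul, mul_assoc]
          _ = (conGen HedgeRel).mk' (FreeMonoid.of b)
              * (conGen HedgeRel).mk' (FreeMonoid.ofList v') := by rw [heq']
          _ = (conGen HedgeRel).mk' (FreeMonoid.of b * FreeMonoid.ofList v') :=
                (map_mul _ _ _).symm

lemma hedge_normalize (x : HedgeMonoid) :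
    ∃ u : List ℕ+, u.Pairwise (· < ·) ∧ x = (conGen HedgeRel).mk' (FreeMonoid.ofList u) := by
  obtain ⟨w, rfl⟩ := Con.mk'_surjective x
  have : ∀ l : List ℕ+, ∃ u : List ℕ+, u.Pairwise (· < ·) ∧
      (conGen HedgeRel).mk' (FreeMonoid.ofList l) = (conGen HedgeRel).mk' (FreeMonoid.ofList u) := by
    intro l
    induction l with
    | nil => exact ⟨[], List.Pairwise.nil, rfl⟩
    | cons a l ih =>
      obtain ⟨u, hu, hequ⟩ := ih
      obtain ⟨v, hv, _, heqv⟩ := insert_sorted u a hu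
      refine ⟨v, hv, ?_⟩
      have e : FreeMonoid.ofList (a :: l) = FreeMonoid.of a * FreeMonoid.ofList l := rfl
      rw [e, map_mul, hequ, ← map_mul, heqv]

  obtain ⟨u, hu, he⟩ := this w
  exact ⟨u, hu, he⟩

def HedgeSet : Set (Function.End ℕ+) :=
  {f | Monotone f ∧ Function.Surjective f ∧
    ∃ c N : ℕ, ∀ m : ℕ+, N ≤ (m : ℕ) → ((f m : ℕ+) : ℕ) = (m : ℕ) - c}

lemma one_mem_hedgeSet : (1 : Function.End ℕ+) ∈ HedgeSet :=
  ⟨monotone_id, Function.surjective_id, 0, 0, fun m _ => by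
    show ((m : ℕ+) : ℕ) = (m : ℕ) - 0
    omega⟩

lemma etaFun_mem_hedgeSet (k : ℕ+) : etaFun k ∈ HedgeSet := by
  refine ⟨?_, ?_, 1, (k : ℕ) + 1, ?_⟩
  · intro x y hxy
    have hxy' : (x : ℕ) ≤ (y : ℕ) := (PNat.coe_le_coe x y).mpr hxy
    rw [← PNat.coe_le_coe, etaFun_coe, etaFun_coe]
    have hx := x.pos
    have hy := y.pos
    split_ifs <;> omega
  · intro n
    by_cases h : n ≤ k
    · exact ⟨n, by simp [etaFun, h]⟩
    · refine ⟨n + 1, ?_⟩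
      apply PNat.coe_injective
      rw [etaFun_coe]
      have hk : (k : ℕ) < (n : ℕ) := (PNat.coe_lt_coe k n).mpr (lt_of_not_ge h)
      rw [PNat.add_coe, PNat.one_coe, if_neg (by omega)]
      omega
  · intro m hm
    rw [etaFun_coe, if_neg (by omega)]

lemma mul_mem_hedgeSet {f g : Function.End ℕ+} (hf : f ∈ HedgeSet) (hg : g ∈ HedgeSet) :
    f * g ∈ HedgeSet := by
  obtain ⟨hfm, hfs, cf, Nf, hfe⟩ := hf
  obtain ⟨hgm, hgs, cg, Ng, hge⟩ := hg
  refine ⟨hfm.comp hgm, hfs.comp hgs, cf + cg, max Ng (Nf + cg), fun m hm => ?_⟩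
  have hm1 : Ng ≤ (m : ℕ) := le_trans (le_max_left _ _) hm
  have hm2 : Nf + cg ≤ (m : ℕ) := le_trans (le_max_right _ _) hm
  have h1 : ((g m : ℕ+) : ℕ) = (m : ℕ) - cg := hge m hm1
  have h2 : Nf ≤ ((g m : ℕ+) : ℕ) := by omega
  have h3 := hfe (g m) h2
  show ((f (g m) : ℕ+) : ℕ) = (m : ℕ) - (cf + cg)
  omega

lemma lift_mem_hedgeSet (u : List ℕ+) :
    (FreeMonoid.lift etaFun) (FreeMonoid.ofList u) ∈ HedgeSet := by
  induction u with
  | nil =>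
    rw [show FreeMonoid.ofList ([] : List ℕ+) = 1 from rfl, map_one]
    exact one_mem_hedgeSet
  | cons a rest ih =>
    rw [show FreeMonoid.ofList (a :: rest) = FreeMonoid.of a * FreeMonoid.ofList rest from rfl,
      map_mul, FreeMonoid.lift_eval_of]
    exact mul_mem_hedgeSet (etaFun_mem_hedgeSet a) ih

lemma mem_hedgeSet_exists {f : Function.End ℕ+} (hf : f ∈ HedgeSet) :
    ∃ u : List ℕ+, u.Pairwise (· < ·) ∧ (FreeMonoid.lift etaFun) (FreeMonoid.ofList u) = f := by
  obtain ⟨hmono, hsurj, c, N, he⟩ := hf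
  have hf1 : f 1 = 1 := by
    obtain ⟨x, hx⟩ := hsurj 1
    refine le_antisymm ?_ (f 1).one_le
    calc f 1 ≤ f x := hmono x.one_le
      _ = 1 := hx
  have hstep : ∀ m : ℕ+,
      ((f (m + 1) : ℕ+) : ℕ) = ((f m : ℕ+) : ℕ) ∨
      ((f (m + 1) : ℕ+) : ℕ) = ((f m : ℕ+) : ℕ) + 1 := by
    intro m
    have h1 : f m ≤ f (m + 1) := hmono (le_of_lt (PNat.lt_add_one_iff.mpr le_rfl))
    have h1' : ((f m : ℕ+) : ℕ) ≤ ((f (m + 1) : ℕ+) : ℕ) := (PNat.coe_le_coe _ _).mpr h1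
    by_cases h2 : ((f (m + 1) : ℕ+) : ℕ) ≤ ((f m : ℕ+) : ℕ) + 1
    · omega
    · exfalso
      obtain ⟨x, hx⟩ := hsurj (f m + 1)
      rcases le_or_gt x m with hxm | hxm
      · have h3 : ((f x : ℕ+) : ℕ) ≤ ((f m : ℕ+) : ℕ) := (PNat.coe_le_coe _ _).mpr (hmono hxm)
        rw [hx] at h3
        rw [PNat.add_coe, PNat.one_coe] at h3
        omega
      · have hx1 : m + 1 ≤ x := PNat.add_one_le_iff.mpr hxm
        have h3 : ((f (m + 1) : ℕ+) : ℕ) ≤ ((f x : ℕ+) : ℕ) := (PNat.coe_le_coe _ _).mpr (hmono hx1)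
        rw [hx, PNat.add_coe, PNat.one_coe] at h3
        omega
  have hA : ∀ a : ℕ+, f (a + 1) = f a → (a : ℕ) < N := by
    intro a hfa
    by_contra hN
    push_neg at hN
    have e1 := he a hN
    have e2 := he (a + 1) (by rw [PNat.add_coe, PNat.one_coe]; omega)
    rw [hfa] at e2
    rw [PNat.add_coe, PNat.one_coe] at e2
    have hp := (f a).pos
    omega
  set L : List ℕ+ := ((List.range N).map (fun i => (⟨i + 1, Nat.succ_pos i⟩ : ℕ+))).filter
      (fun a => decide (f (a + 1) = f a)) with hLdef
  have hLs : L.Pairwise (· < ·) := by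
    apply List.Pairwise.filter
    refine List.Pairwise.map _ ?_ List.pairwise_lt_range
    intro i j hij
    exact (PNat.mk_lt_mk _ _ _ _).mpr (by omega)
  have hLmem : ∀ a : ℕ+, a ∈ L ↔ f (a + 1) = f a := by
    intro a
    constructor
    · intro ha
      have := List.of_mem_filter ha
      simpa using this
    · intro ha
      apply List.mem_filter.mpr
      refine ⟨?_, by simpa using ha⟩
      apply List.mem_map.mpr
      have hp := a.pos
      refine ⟨(a : ℕ) - 1, List.mem_range.mpr (by have := hA a ha; omega), ?_⟩
      apply Subtype.ext
      show (a : ℕ) - 1 + 1 = (a : ℕ)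
      omega
  have hmain : ∀ m : ℕ+, ((f m : ℕ+) : ℕ) = (m : ℕ) - L.countP (fun a => decide (a < m)) := by
    intro m
    induction m using PNat.recOn with
    | one =>
      have hc : L.countP (fun a => decide (a < 1)) = 0 :=
        List.countP_eq_zero.mpr (fun x _ => by simp [PNat.not_lt_one x])
      rw [hf1, hc]
      rfl
    | succ m ih =>
      have hc := countP_succ m L
      have hco : ((m + 1 : ℕ+) : ℕ) = (m : ℕ) + 1 := by rw [PNat.add_coe, PNat.one_coe]
      have hpos := (f m).pos
      by_cases hmem : m ∈ L
      · have hcnt : L.count m = 1 := List.count_eq_one_of_mem hLs.nodup hmem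
        have h4 : ((f (m + 1) : ℕ+) : ℕ) = ((f m : ℕ+) : ℕ) := by rw [(hLmem m).mp hmem]
        rw [hco] at *
        omega
      · have hcnt : L.count m = 0 := List.count_eq_zero_of_not_mem hmem
        have h4 : ((f (m + 1) : ℕ+) : ℕ) = ((f m : ℕ+) : ℕ) + 1 := by
          rcases hstep m with h | h
          · exact absurd ((hLmem m).mpr (PNat.coe_injective h)) hmem
          · exact h
        rw [hco] at *
        omega
  refine ⟨L, hLs, ?_⟩
  funext m
  apply PNat.coe_injective
  rw [eval_sorted L hLs m, hmain m]


/-- `η_k ↦ etaFun k` extends to a monoid isomorphism from the presented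
hedge monoid onto the monoid `𝓗` of weakly increasing surjections of `ℕ+` that are
eventually a downward shift `m ↦ m - c` (a submonoid of `Function.End ℕ+`, where
multiplication is composition). -/
theorem hedgeMonoid_iso_concrete :
    ∃ φ : HedgeMonoid →* Function.End ℕ+,
      (∀ k : ℕ+, φ (eta k) = etaFun k) ∧
      Function.Injective φ ∧
      Set.range φ = {f : Function.End ℕ+ |
        Monotone f ∧ Function.Surjective f ∧
        ∃ c N : ℕ, ∀ m : ℕ+, N ≤ (m : ℕ) → ((f m : ℕ+) : ℕ) = (m : ℕ) - c} := by
  refine ⟨hedgePhi, fun k => ?_, ?_, ?_⟩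
  · rw [show eta k = (conGen HedgeRel).mk' (FreeMonoid.of k) from rfl, hedgePhi_mk',
      FreeMonoid.lift_eval_of]
  · intro x y hxy
    obtain ⟨u, hu, rfl⟩ := hedge_normalize x
    obtain ⟨v, hv, rfl⟩ := hedge_normalize y
    rw [hedgePhi_mk', hedgePhi_mk'] at hxy
    have huv : u = v := by
      apply sorted_ext u v hu hv
      intro m
      have h1 := eval_sorted u hu m
      have h2 := eval_sorted v hv m
      have hbu := countP_le m u hu 0 (fun x _ => x.pos)
      have hbv := countP_le m v hv 0 (fun x _ => x.pos)
      rw [hxy] at h1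
      omega
    rw [huv]
  · ext f
    constructor
    · rintro ⟨x, rfl⟩
      obtain ⟨u, _, rfl⟩ := hedge_normalize x
      rw [hedgePhi_mk']
      exact lift_mem_hedgeSet u
    · intro hf
      obtain ⟨u, _, he⟩ := mem_hedgeSet_exists hf
      exact ⟨(conGen HedgeRel).mk' (FreeMonoid.ofList u), by rw [hedgePhi_mk', he]⟩
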